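/- Let P₁ = (−2·cos(π/9)·sin(2π/9), 2·cos(π/9)·cos(2π/9)) and P₁' = R(P₁) = (2·cos(π/9)·sin(π/9), −2·cos(π/9)·cos(π/9)). Then the line through P₁ and P₁' meets the circle 𝒞 in exactly one point, namely T₁ = (−2√3·s, 2s); that is, this line is tangent to 𝒞 at T₁. -/

import Mathlib

open Real

noncomputable section

abbrev Pt := EuclideanSpace ℝ (Fin 2)

def pt (x y : ℝ) : Pt := (WithLp.equiv 2 _).symm ![x, y]

/-- The affine line through two points `A` and `B`. -/
def lineThrough (A B : Pt) : Set Pt := {P | ∃ t : ℝ, P = A + t • (B - A)}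

/-- Counterclockwise rotation by angle `θ` about the point `c`. -/
def rotAbout (θ : ℝ) (c p : Pt) : Pt :=
  pt (c 0 + Real.cos θ * (p 0 - c 0) - Real.sin θ * (p 1 - c 1))
     (c 1 + Real.sin θ * (p 0 - c 0) + Real.cos θ * (p 1 - c 1))

/-- The origin. -/
def O : Pt := pt 0 0

/-- Vertices of the regular 9-gon: `D i = (cos(2πi/9 + 17π/18), sin(2πi/9 + 17π/18))`. -/
def D (i : ℤ) : Pt :=
  pt (Real.cos (2 * π * i / 9 + 17 * π / 18)) (Real.sin (2 * π * i / 9 + 17 * π / 18))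

/-- The constant s = sin(π/18)·cos(π/9). -/
def s : ℝ := Real.sin (π / 18) * Real.cos (π / 9)

/-- The point P₁. -/
def P₁ : Pt :=
  pt (-(2 * Real.cos (π / 9) * Real.sin (2 * π / 9)))
     (2 * Real.cos (π / 9) * Real.cos (2 * π / 9))

/-- The point P₁' = R(P₁). -/
def P₁' : Pt :=
  pt (2 * Real.cos (π / 9) * Real.sin (π / 9))
     (-(2 * Real.cos (π / 9) * Real.cos (π / 9)))

/-- The tangency point T₁ = (−2√3·s, 2s). -/
def T₁ : Pt := pt (-(2 * Real.sqrt 3 * s)) (2 * s)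

private lemma distPt (P Q : Pt) :
    dist P Q = Real.sqrt ((P 0 - Q 0)^2 + (P 1 - Q 1)^2) := by
  rw [EuclideanSpace.dist_eq, Fin.sum_univ_two]
  simp [Real.dist_eq, sq_abs]

set_option maxHeartbeats 2000000 in
theorem line_P1P1'_tangent_to_circle
    (C : Set Pt) (ctr : Pt) (rad : ℝ)
    (hC : C = Metric.sphere ctr rad)
    (h1 : D (-1) ∈ C) (h2 : D (-3) ∈ C) (h3 : O ∈ C) :
    rotAbout (8 * π / 9) O P₁ = P₁' ∧
    lineThrough P₁ P₁' ∩ C = {T₁} := by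
  subst hC
  obtain ⟨w, hwdef⟩ : ∃ w, Real.cos (π/18) = w := ⟨_, rfl⟩
  obtain ⟨z, hzdef⟩ : ∃ z, Real.sin (π/18) = z := ⟨_, rfl⟩
  have hw : z^2 + w^2 = 1 := by rw [← hwdef, ← hzdef]; exact Real.sin_sq_add_cos_sq _
  have hz : 8*z^3 - 6*z + 1 = 0 := by
    have h3m := Real.sin_three_mul (π/18)
    rw [show (3*(π/18) : ℝ) = π/6 by ring, Real.sin_pi_div_six, hzdef] at h3m
    linarith
  have hr3 : Real.sqrt 3 = 8*w^3 - 6*w := by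
    have h3m := Real.cos_three_mul (π/18)
    rw [show (3*(π/18) : ℝ) = π/6 by ring, Real.cos_pi_div_six, hwdef] at h3m
    have h2' : Real.sqrt 3 = 2 * (4*w^3 - 3*w) := by rw [← h3m]; ring
    linarith
  have hc1 : Real.cos (π/9) = 2*w^2 - 1 := by
    rw [show (π/9 : ℝ) = 2*(π/18) by ring, Real.cos_two_mul, hwdef]
  have hs1 : Real.sin (π/9) = 2*z*w := by
    rw [show (π/9 : ℝ) = 2*(π/18) by ring, Real.sin_two_mul, hwdef, hzdef]
  have hc2' : Real.cos (2*π/9) = 2*Real.cos (π/9)^2 - 1 := by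
    rw [show (2*π/9 : ℝ) = 2*(π/9) by ring, Real.cos_two_mul]
  have hs2' : Real.sin (2*π/9) = 2*Real.sin (π/9)*Real.cos (π/9) := by
    rw [show (2*π/9 : ℝ) = 2*(π/9) by ring, Real.sin_two_mul]
  have hc2 : Real.cos (2*π/9) = 2*(2*w^2-1)^2 - 1 := by rw [hc2', hc1]
  have hs2 : Real.sin (2*π/9) = 2*(2*z*w)*(2*w^2-1) := by rw [hs2', hs1, hc1]
  have hπ := Real.pi_pos
  have hc1pos : 0 < Real.cos (π/9) := by
    apply Real.cos_pos_of_mem_Ioo; rw [Set.mem_Ioo]; constructor <;> linarith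
  have hc2pos : 0 < Real.cos (2*π/9) := by
    apply Real.cos_pos_of_mem_Ioo; rw [Set.mem_Ioo]; constructor <;> linarith
  have hs2pos : 0 < Real.sin (2*π/9) :=
    Real.sin_pos_of_pos_of_lt_pi (by linarith) (by linarith)
  -- coordinates of the given points
  have hD1x : D (-1) 0 = -Real.sin (2*π/9) := by
    show Real.cos (2 * π * ((-1 : ℤ) : ℝ) / 9 + 17 * π / 18) = _
    rw [show (2 * π * ((-1 : ℤ) : ℝ) / 9 + 17 * π / 18) = π - (π/2 - 2*π/9) by push_cast; ring,
      Real.cos_pi_sub, Real.cos_pi_div_two_sub]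
  have hD1y : D (-1) 1 = Real.cos (2*π/9) := by
    show Real.sin (2 * π * ((-1 : ℤ) : ℝ) / 9 + 17 * π / 18) = _
    rw [show (2 * π * ((-1 : ℤ) : ℝ) / 9 + 17 * π / 18) = π - (π/2 - 2*π/9) by push_cast; ring,
      Real.sin_pi_sub, Real.sin_pi_div_two_sub]
  have hD3x : D (-3) 0 = Real.sin (2*π/9) := by
    show Real.cos (2 * π * ((-3 : ℤ) : ℝ) / 9 + 17 * π / 18) = _
    rw [show (2 * π * ((-3 : ℤ) : ℝ) / 9 + 17 * π / 18) = π/2 - 2*π/9 by push_cast; ring,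
      Real.cos_pi_div_two_sub]
  have hD3y : D (-3) 1 = Real.cos (2*π/9) := by
    show Real.sin (2 * π * ((-3 : ℤ) : ℝ) / 9 + 17 * π / 18) = _
    rw [show (2 * π * ((-3 : ℤ) : ℝ) / 9 + 17 * π / 18) = π/2 - 2*π/9 by push_cast; ring,
      Real.sin_pi_div_two_sub]
  have hr0 : 0 ≤ rad := by
    rw [Metric.mem_sphere] at h3; rw [← h3]; exact dist_nonneg
  have sq_of_mem : ∀ P : Pt, P ∈ Metric.sphere ctr rad →
      (P 0 - ctr 0)^2 + (P 1 - ctr 1)^2 = rad^2 := by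
    intro P hP
    rw [Metric.mem_sphere, distPt] at hP
    rw [← hP]
    exact (Real.sq_sqrt (by positivity)).symm
  have e1 := sq_of_mem _ h1
  rw [hD1x, hD1y] at e1
  have e2 := sq_of_mem _ h2
  rw [hD3x, hD3y] at e2
  have e3 := sq_of_mem _ h3
  rw [show O 0 = (0:ℝ) from rfl, show O 1 = (0:ℝ) from rfl] at e3
  have ha0 : ctr 0 = 0 := by
    have h4 : 4 * Real.sin (2*π/9) * ctr 0 = 0 := by linear_combination e1 - e2
    rcases mul_eq_zero.mp h4 with h | h
    · linarith
    · exact h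
  have hpy : Real.sin (2*π/9)^2 + Real.cos (2*π/9)^2 = 1 := Real.sin_sq_add_cos_sq _
  have ha1 : 2 * Real.cos (2*π/9) * ctr 1 = 1 := by
    linear_combination e3 - e2 + hpy - 2 * Real.sin (2*π/9) * ha0
  have ha1pos : 0 < ctr 1 := by
    have h5 : ctr 1 = 1/(2*Real.cos (2*π/9)) := by
      rw [eq_div_iff (by positivity)]; linarith [ha1]
    rw [h5]; positivity
  have hrad : rad = ctr 1 := by
    have h6 : (rad - ctr 1) * (rad + ctr 1) = 0 := by
      linear_combination ctr 0 * ha0 - e3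
    rcases mul_eq_zero.mp h6 with h | h
    · linarith
    · linarith
  have ha1' := ha1
  rw [hc2] at ha1'
  constructor
  · -- the rotation statement
    ext i
    fin_cases i
    · show O 0 + Real.cos (8 * π / 9) * (P₁ 0 - O 0) - Real.sin (8 * π / 9) * (P₁ 1 - O 1)
        = P₁' 0
      show (0:ℝ) + Real.cos (8 * π / 9) * (-(2 * Real.cos (π / 9) * Real.sin (2 * π / 9)) - 0) - Real.sin (8 * π / 9) * (2 * Real.cos (π / 9) * Real.cos (2 * π / 9) - 0)
        = 2 * Real.cos (π / 9) * Real.sin (π / 9)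
      rw [show (8*π/9 : ℝ) = π - π/9 by ring, Real.cos_pi_sub, Real.sin_pi_sub, hs2', hc2']
      ring
    · show O 1 + Real.sin (8 * π / 9) * (P₁ 0 - O 0) + Real.cos (8 * π / 9) * (P₁ 1 - O 1)
        = P₁' 1
      show (0:ℝ) + Real.sin (8 * π / 9) * (-(2 * Real.cos (π / 9) * Real.sin (2 * π / 9)) - 0) + Real.cos (8 * π / 9) * (2 * Real.cos (π / 9) * Real.cos (2 * π / 9) - 0)
        = -(2 * Real.cos (π / 9) * Real.cos (π / 9))
      rw [show (8*π/9 : ℝ) = π - π/9 by ring, Real.cos_pi_sub, Real.sin_pi_sub, hs2', hc2']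
      have hp1 : Real.sin (π/9)^2 + Real.cos (π/9)^2 = 1 := Real.sin_sq_add_cos_sq _
      linear_combination (-4*Real.cos (π/9)^2) * hp1
  · -- the tangency statement
    ext P
    simp only [Set.mem_inter_iff, Set.mem_singleton_iff, lineThrough, Set.mem_setOf_eq]
    constructor
    · rintro ⟨⟨u, hP⟩, hm⟩
      have e := sq_of_mem P hm
      rw [ha0, hrad] at e
      have hx : P 0 = P₁ 0 + u * (P₁' 0 - P₁ 0) := by rw [hP]; rfl
      have hy : P 1 = P₁ 1 + u * (P₁' 1 - P₁ 1) := by rw [hP]; rfl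
      rw [hx, hy] at e
      have e' : (-(2 * Real.cos (π / 9) * Real.sin (2 * π / 9)) + u * (2 * Real.cos (π / 9) * Real.sin (π / 9) - (-(2 * Real.cos (π / 9) * Real.sin (2 * π / 9)))) - 0)^2
          + (2 * Real.cos (π / 9) * Real.cos (2 * π / 9) + u * (-(2 * Real.cos (π / 9) * Real.cos (π / 9)) - (2 * Real.cos (π / 9) * Real.cos (2 * π / 9))) - ctr 1)^2 = ctr 1 ^ 2 := e
      rw [hs2, hc2, hs1, hc1] at e'
      have hApos : 0 < Real.cos (2*π/9) * ((2 * Real.cos (π / 9) * Real.sin (π / 9) - (-(2 * Real.cos (π / 9) * Real.sin (2 * π / 9))))^2 + (-(2 * Real.cos (π / 9) * Real.cos (π / 9)) - (2 * Real.cos (π / 9) * Real.cos (2 * π / 9)))^2) := by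
        have hdy : (-(2 * Real.cos (π / 9) * Real.cos (π / 9)) - (2 * Real.cos (π / 9) * Real.cos (2 * π / 9))) < 0 := by
          linarith [mul_pos hc1pos hc1pos, mul_pos hc1pos hc2pos]
        have hY2 : 0 < (-(2 * Real.cos (π / 9) * Real.cos (π / 9)) - (2 * Real.cos (π / 9) * Real.cos (2 * π / 9)))^2 := by
          rw [sq]; exact mul_pos_of_neg_of_neg hdy hdy
        have h7 : 0 < (2 * Real.cos (π / 9) * Real.sin (π / 9) - (-(2 * Real.cos (π / 9) * Real.sin (2 * π / 9))))^2 + (-(2 * Real.cos (π / 9) * Real.cos (π / 9)) - (2 * Real.cos (π / 9) * Real.cos (2 * π / 9)))^2 := by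
          linarith [sq_nonneg (2 * Real.cos (π / 9) * Real.sin (π / 9) - (-(2 * Real.cos (π / 9) * Real.sin (2 * π / 9))))]
        exact mul_pos hc2pos h7
      have key : Real.cos (2*π/9) * ((2 * Real.cos (π / 9) * Real.sin (π / 9) - (-(2 * Real.cos (π / 9) * Real.sin (2 * π / 9))))^2 + (-(2 * Real.cos (π / 9) * Real.cos (π / 9)) - (2 * Real.cos (π / 9) * Real.cos (2 * π / 9)))^2)
          * (u - 2*Real.sin (π/18))^2 = 0 := by
        rw [hs2, hc2, hs1, hc1, hzdef]
        linear_combination (1 + (-8)*w^2 + 8*w^4) * e' + (((-2) + 20*w^2 + (-48)*w^4 + 32*w^6) + ((-12)*w^2*u + 40*w^4*u + (-32)*w^6*u)) * ha1'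
          + ((12*u + (-64)*z*u + (-168)*z^2*u + 768*z^3*u + 672*z^4*u + (-2816)*z^5*u + (-1024)*z^6*u + 4096*z^7*u + 512*z^8*u + (-2048)*z^9*u + 72*w^2*u + (-64)*w^2*z*u + (-160)*w^2*z^2*u + 768*w^2*z^3*u + 512*w^2*z^4*u + (-2048)*w^2*z^5*u + (-512)*w^2*z^6*u + 2048*w^2*z^7*u + (-992)*w^4*u + 512*w^4*z*u + 512*w^4*z^4*u + (-2048)*w^4*z^5*u + 7424*w^6*u + (-7936)*w^6*z*u + (-512)*w^6*z^2*u + 2048*w^6*z^3*u + (-26624)*w^8*u + 36864*w^8*z*u + 49152*w^10*u + (-79872)*w^10*z*u + (-45056)*w^12*u + 81920*w^12*z*u + 16384*w^14*u + (-32768)*w^14*z*u) + (4 + 96*z^2 + (-864)*z^4 + 2944*z^6 + (-4096)*z^8 + 2048*z^10 + (-128)*w^2 + 32*w^2*z^2 + (-896)*w^2*z^4 + 2048*w^2*z^6 + (-2048)*w^2*z^8 + 1184*w^4 + (-384)*w^4*z^2 + 2048*w^4*z^6 + (-6272)*w^6 + 7936*w^6*z^2 + (-2048)*w^6*z^4 +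 18432*w^8 + (-36864)*w^8*z^2 + (-29696)*w^10 + 79872*w^10*z^2 + 24576*w^12 + (-81920)*w^12*z^2 + (-8192)*w^14 + 32768*w^14*z^2)) * hw + ((12*u + 8*z*u + (-132)*z^2*u + (-56)*z^3*u + 440*z^4*u + 112*z^5*u + (-576)*z^6*u + (-64)*z^7*u + 256*z^8*u) + ((-2) + (-12)*z + 20*z^2 + 136*z^3 + (-48)*z^4 + (-448)*z^5 + 32*z^6 + 576*z^7 + (-256)*z^9)) * hz
      have hu : u = 2*Real.sin (π/18) := by
        rcases mul_eq_zero.mp key with h | h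
        · exact absurd h (ne_of_gt hApos)
        · have := sq_eq_zero_iff.mp h
          linarith [this]
      have hTx : P 0 = T₁ 0 := by
        rw [hx, hu]
        show -(2 * Real.cos (π / 9) * Real.sin (2 * π / 9)) + 2*Real.sin (π/18) * (2 * Real.cos (π / 9) * Real.sin (π / 9) - (-(2 * Real.cos (π / 9) * Real.sin (2 * π / 9)))) = -(2 * Real.sqrt 3 * (Real.sin (π / 18) * Real.cos (π / 9)))
        rw [hs2, hs1, hc1, hr3, hzdef]
        linear_combination ((-8)*w*z + 16*w*z^2 + (-64)*w*z^4 + 64*w^3*z^2) * hw + ((-4)*w*z + 8*w*z^3) * hz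
      have hTy : P 1 = T₁ 1 := by
        rw [hy, hu]
        show 2 * Real.cos (π / 9) * Real.cos (2 * π / 9) + 2*Real.sin (π/18) * (-(2 * Real.cos (π / 9) * Real.cos (π / 9)) - (2 * Real.cos (π / 9) * Real.cos (2 * π / 9))) = 2 * (Real.sin (π / 18) * Real.cos (π / 9))
        rw [hc2, hc1, hzdef]
        linear_combination (4 + (-12)*z + (-16)*z^2 + 48*z^3 + 32*z^4 + (-64)*z^5 + (-16)*w^2 + 16*w^2*z + (-32)*w^2*z^2 + 64*w^2*z^3 + 32*w^4 + (-64)*w^4*z) * hw + (2 + 2*z + (-8)*z^2 + (-4)*z^3 + 8*z^4) * hz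
      ext i
      fin_cases i
      · exact hTx
      · exact hTy
    · rintro rfl
      refine ⟨⟨2*Real.sin (π/18), ?_⟩, ?_⟩
      · ext i
        fin_cases i
        · show -(2 * Real.sqrt 3 * (Real.sin (π / 18) * Real.cos (π / 9))) = -(2 * Real.cos (π / 9) * Real.sin (2 * π / 9)) + 2*Real.sin (π/18) * (2 * Real.cos (π / 9) * Real.sin (π / 9) - (-(2 * Real.cos (π / 9) * Real.sin (2 * π / 9))))
          rw [hs2, hs1, hc1, hr3, hzdef]
          linear_combination (8*w*z + (-16)*w*z^2 + 64*w*z^4 + (-64)*w^3*z^2) * hw + (4*w*z + (-8)*w*z^3) * hz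
        · show 2 * (Real.sin (π / 18) * Real.cos (π / 9)) = 2 * Real.cos (π / 9) * Real.cos (2 * π / 9) + 2*Real.sin (π/18) * (-(2 * Real.cos (π / 9) * Real.cos (π / 9)) - (2 * Real.cos (π / 9) * Real.cos (2 * π / 9)))
          rw [hc2, hc1, hzdef]
          linear_combination ((-4) + 12*z + 16*z^2 + (-48)*z^3 + (-32)*z^4 + 64*z^5 + 16*w^2 + (-16)*w^2*z + 32*w^2*z^2 + (-64)*w^2*z^3 + (-32)*w^4 + 64*w^4*z) * hw + ((-2) + (-2)*z + 8*z^2 + 4*z^3 + (-8)*z^4) * hz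
      · rw [Metric.mem_sphere, distPt, hrad, ha0]
        have h0 : Real.cos (2*π/9) * ((T₁ 0)^2 + (T₁ 1)^2) - T₁ 1 = 0 := by
          show Real.cos (2*π/9) * ((-(2 * Real.sqrt 3 * (Real.sin (π / 18) * Real.cos (π / 9))))^2 + (2 * (Real.sin (π / 18) * Real.cos (π / 9)))^2) - (2 * (Real.sin (π / 18) * Real.cos (π / 9))) = 0
          rw [hc2, hc1, hr3, hzdef]
          linear_combination ((-4)*z + 16*z^2 + (-368)*z^4 + 2624*z^6 + (-9856)*z^8 + 19968*z^10 + (-20480)*z^12 + 8192*z^14 + (-80)*w^2*z^2 + (-448)*w^2*z^4 + 2176*w^2*z^6 + (-7680)*w^2*z^8 + 12288*w^2*z^10 + (-8192)*w^2*z^12 + 1856*w^4*z^2 + 1408*w^4*z^4 + 3584*w^4*z^6 + (-4096)*w^4*z^8 + 8192*w^4*z^10 + (-9088)*w^6*z^2 + (-7680)*w^6*z^4 + (-4096)*w^6*z^6 + (-8192)*w^6*z^8 + 19968*w^8*z^2 + 12288*w^8*z^4 + 8192*w^8*z^6 + (-20480)*w^10*z^2 + (-8192)*w^10*z^4 + 8192*w^12*z^2)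 * hw + ((-2)*z + 8*z^2 + 52*z^3 + (-56)*z^4 + (-400)*z^5 + 176*z^6 + 1504*z^7 + (-256)*z^8 + (-2944)*z^9 + 128*z^10 + 2816*z^11 + (-1024)*z^13) * hz
        have hEq : (T₁ 0 - 0)^2 + (T₁ 1 - ctr 1)^2 = ctr 1 ^ 2 := by
          linear_combination 2 * ctr 1 * h0 - ((T₁ 0)^2 + (T₁ 1)^2) * ha1
        rw [hEq, Real.sqrt_sq (le_of_lt ha1pos)]
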